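/- Let p ≥ 2, r = ⌈log₂(p−1)⌉, q with 0 ≤ q ≤ p−1, q_0 = q_1 integers 0 ≤ q_0, q_1 ≤ p−1, and r_1, r_2 ≥ 0 with r_1 + r_2 = r. For every m ≥ 2·binom(r_1+1,2) + 2·binom(r_2+1,2) + 2: forb(m, 3, F(p−q_0, p, p, p−q_1)) ≥ forb(m, 3, p·K_2) − min{q_0,q_1}·binom(r_1+1, 2) − max{q_0,q_1}·binom(r_2+1, 2). -/

import Mathlib

open Finset

/-- `F` is a configuration in the simple matrix `A` (columns of `A` form a finset):
there is an injection of rows such that the multiset `F` of columns is a sub-multiset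
of the restricted columns of `A`. -/
def ConfigIn {s k m : ℕ} (F : Multiset (Fin k → Fin s)) (A : Finset (Fin m → Fin s)) : Prop :=
  ∃ ρ : Fin k ↪ Fin m, F ≤ A.1.map (fun col => col ∘ ρ)

/-- The forbidden number: the maximum number of columns of an `m`-rowed simple
`s`-matrix avoiding `F` as a configuration. -/
noncomputable def forb (m s : ℕ) {k : ℕ} (F : Multiset (Fin k → Fin s)) : ℕ :=
  sSup {n : ℕ | ∃ A : Finset (Fin m → Fin s), ¬ ConfigIn F A ∧ A.card = n}

/-- The 2-rowed configuration with `a` columns (0,0), `b` columns (1,0),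
`c` columns (0,1) and `d` columns (1,1), viewed as a 3-matrix. -/
def Fabcd (a b c d : ℕ) : Multiset (Fin 2 → Fin 3) :=
  Multiset.replicate a ![0, 0] + Multiset.replicate b ![1, 0] +
  Multiset.replicate c ![0, 1] + Multiset.replicate d ![1, 1]

/-- `p` copies of `K₂`. -/
def pK2 (p : ℕ) : Multiset (Fin 2 → Fin 3) := Fabcd p p p p

/-- `p` copies of `I₂`. -/
def pI2 (p : ℕ) : Multiset (Fin 2 → Fin 3) := Fabcd 0 p p 0

namespace ForbWork

/-- number of columns of `A` with value `u` at row `i` and `v` at row `j`. -/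
def cnt {m : ℕ} (A : Finset (Fin m → Fin 3)) (i j : Fin m) (u v : Fin 3) : ℕ :=
  (A.filter (fun c => c i = u ∧ c j = v)).card

lemma cnt_comm {m : ℕ} (A : Finset (Fin m → Fin 3)) (i j : Fin m) (u v : Fin 3) :
    cnt A i j u v = cnt A j i v u := by
  unfold cnt
  congr 1
  apply Finset.filter_congr
  intro c _
  constructor <;> (rintro ⟨h1, h2⟩; exact ⟨h2, h1⟩)

lemma count_map_eq {m : ℕ} (A : Finset (Fin m → Fin 3)) (ρ : Fin 2 ↪ Fin m)
    (g : Fin 2 → Fin 3) :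
    Multiset.count g (A.1.map (fun col => col ∘ ρ)) = cnt A (ρ 0) (ρ 1) (g 0) (g 1) := by
  rw [Multiset.count_map]
  unfold cnt
  rw [← Finset.filter_val]
  · simp only [Finset.card_def]
    congr 1
    apply Multiset.filter_congr
    intro c _
    constructor
    · intro h
      exact ⟨(congrFun h 0).symm, (congrFun h 1).symm⟩
    · rintro ⟨h1, h2⟩
      funext x
      have : ∀ y : Fin 2, y = 0 ∨ y = 1 := by decide
      rcases this x with rfl | rfl
      · exact h1.symm
      · exact h2.symm

lemma card_Fabcd (a b c d : ℕ) : Multiset.card (Fabcd a b c d) = a + b + c + d := by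
  simp [Fabcd]

lemma configIn_iff {m a b c d : ℕ} (A : Finset (Fin m → Fin 3)) :
    ConfigIn (Fabcd a b c d) A ↔
      ∃ i j : Fin m, i ≠ j ∧ a ≤ cnt A i j 0 0 ∧ b ≤ cnt A i j 1 0 ∧
        c ≤ cnt A i j 0 1 ∧ d ≤ cnt A i j 1 1 := by
  have hne : (![0,0] : Fin 2 → Fin 3) ≠ ![1,0] ∧ (![0,0] : Fin 2 → Fin 3) ≠ ![0,1] ∧
      (![0,0] : Fin 2 → Fin 3) ≠ ![1,1] ∧ (![1,0] : Fin 2 → Fin 3) ≠ ![0,1] ∧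
      (![1,0] : Fin 2 → Fin 3) ≠ ![1,1] ∧ (![0,1] : Fin 2 → Fin 3) ≠ ![1,1] := by decide
  obtain ⟨ne1, ne2, ne3, ne4, ne5, ne6⟩ := hne
  constructor
  · rintro ⟨ρ, hle⟩
    refine ⟨ρ 0, ρ 1, ρ.injective.ne (by decide), ?_, ?_, ?_, ?_⟩ <;>
    · first
        | (have := Multiset.count_le_of_le (![0,0] : Fin 2 → Fin 3) hle
           rw [count_map_eq] at this
           simpa [Fabcd, Multiset.count_replicate, ne1, ne2, ne3, ne1.symm, ne2.symm, ne3.symm] using this)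
        | (have := Multiset.count_le_of_le (![1,0] : Fin 2 → Fin 3) hle
           rw [count_map_eq] at this
           simpa [Fabcd, Multiset.count_replicate, ne1, ne4, ne5, ne1.symm, ne4.symm, ne5.symm] using this)
        | (have := Multiset.count_le_of_le (![0,1] : Fin 2 → Fin 3) hle
           rw [count_map_eq] at this
           simpa [Fabcd, Multiset.count_replicate, ne2, ne4, ne6, ne2.symm, ne4.symm, ne6.symm] using this)
        | (have := Multiset.count_le_of_le (![1,1] : Fin 2 → Fin 3) hle
           rw [count_map_eq] at this
           simpa [Fabcd, Multiset.count_replicate, ne3, ne5, ne6, ne3.symm, ne5.symm, ne6.symm] using this)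
  · rintro ⟨i, j, hij, h1, h2, h3, h4⟩
    have hinj : Function.Injective ![i, j] := by
      intro x y hxy
      fin_cases x <;> fin_cases y <;> simp_all
    refine ⟨⟨![i, j], hinj⟩, ?_⟩
    rw [Multiset.le_iff_count]
    intro g
    have hrw : Multiset.count g (A.1.map (fun col => col ∘ (⟨![i,j], hinj⟩ : Fin 2 ↪ Fin m)))
        = cnt A i j (g 0) (g 1) := by
      rw [count_map_eq]; rfl
    rw [hrw]
    by_cases e1 : g = ![0,0]
    · subst e1
      simpa [Fabcd, Multiset.count_replicate, ne1, ne2, ne3, ne1.symm, ne2.symm, ne3.symm] using h1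
    by_cases e2 : g = ![1,0]
    · subst e2
      simpa [Fabcd, Multiset.count_replicate, ne1, ne4, ne5, ne1.symm, ne4.symm, ne5.symm] using h2
    by_cases e3 : g = ![0,1]
    · subst e3
      simpa [Fabcd, Multiset.count_replicate, ne2, ne4, ne6, ne2.symm, ne4.symm, ne6.symm] using h3
    by_cases e4 : g = ![1,1]
    · subst e4
      simpa [Fabcd, Multiset.count_replicate, ne3, ne5, ne6, ne3.symm, ne5.symm, ne6.symm] using h4
    · simp [Fabcd, Multiset.count_replicate, Ne.symm e1, Ne.symm e2, Ne.symm e3, Ne.symm e4]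

lemma forb_lower {m k : ℕ} (F : Multiset (Fin k → Fin 3)) (A : Finset (Fin m → Fin 3))
    (hA : ¬ ConfigIn F A) : A.card ≤ forb m 3 F := by
  apply le_csSup
  · refine ⟨3 ^ m, ?_⟩
    rintro n ⟨B, -, rfl⟩
    calc B.card ≤ Fintype.card (Fin m → Fin 3) := Finset.card_le_univ B
    _ = 3 ^ m := by simp
  · exact ⟨A, hA, rfl⟩

lemma forb_upper {m k : ℕ} (F : Multiset (Fin k → Fin 3)) (hF : F ≠ 0) (K : ℕ)
    (h : ∀ A : Finset (Fin m → Fin 3), ¬ ConfigIn F A → A.card ≤ K) : forb m 3 F ≤ K := by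
  apply csSup_le
  · refine ⟨0, ∅, ?_, rfl⟩
    rintro ⟨ρ, hle⟩
    apply hF
    simpa using hle
  · rintro n ⟨A, hA, rfl⟩
    exact h A hA




lemma card_pairs_lt {m : ℕ} (s : Finset (Fin m)) :
    ((s ×ˢ s).filter (fun e : Fin m × Fin m => (e.1 : ℕ) < (e.2 : ℕ))).card
      = s.card.choose 2 := by
  rw [← Finset.card_powersetCard 2 s]
  apply Finset.card_bij' (fun e _ => ({e.1, e.2} : Finset (Fin m)))
    (fun t ht => (t.min' (by
        rw [Finset.mem_powersetCard] at ht
        exact Finset.card_pos.mp (by omega)),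
      t.max' (by
        rw [Finset.mem_powersetCard] at ht
        exact Finset.card_pos.mp (by omega))))
  case hi =>
    intro e he
    rw [Finset.mem_filter, Finset.mem_product] at he
    obtain ⟨⟨h1, h2⟩, hlt⟩ := he
    rw [Finset.mem_powersetCard]
    constructor
    · intro x hx
      rw [Finset.mem_insert, Finset.mem_singleton] at hx
      rcases hx with rfl | rfl <;> assumption
    · rw [Finset.card_insert_of_notMem, Finset.card_singleton]
      rw [Finset.mem_singleton]
      intro h
      rw [h] at hlt
      omega
  case hj =>
    intro t ht
    rw [Finset.mem_powersetCard] at ht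
    rw [Finset.mem_filter, Finset.mem_product]
    have hmin := t.min'_mem (Finset.card_pos.mp (by omega))
    have hmax := t.max'_mem (Finset.card_pos.mp (by omega))
    refine ⟨⟨ht.1 hmin, ht.1 hmax⟩, ?_⟩
    exact Finset.min'_lt_max'_of_card t (by omega)
  case left_inv =>
    intro e he
    rw [Finset.mem_filter, Finset.mem_product] at he
    obtain ⟨⟨h1, h2⟩, hlt⟩ := he
    have hmem1 : e.1 ∈ ({e.1, e.2} : Finset (Fin m)) := by simp
    have hmem2 : e.2 ∈ ({e.1, e.2} : Finset (Fin m)) := by simp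
    have hlt' : e.1 < e.2 := by
      rw [Fin.lt_iff_val_lt_val]; exact hlt
    have hminle : ({e.1, e.2} : Finset (Fin m)).min' ⟨e.1, hmem1⟩ ≤ e.1 :=
      Finset.min'_le _ _ hmem1
    have hmin : ({e.1, e.2} : Finset (Fin m)).min' ⟨e.1, hmem1⟩ = e.1 := by
      have hm := Finset.min'_mem ({e.1, e.2} : Finset (Fin m)) ⟨e.1, hmem1⟩
      rw [Finset.mem_insert, Finset.mem_singleton] at hm
      rcases hm with h | h
      · exact h
      · exact absurd (lt_of_le_of_lt (h ▸ hminle) hlt') (lt_irrefl _)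
    have hmaxge : e.2 ≤ ({e.1, e.2} : Finset (Fin m)).max' ⟨e.1, hmem1⟩ :=
      Finset.le_max' _ _ hmem2
    have hmax : ({e.1, e.2} : Finset (Fin m)).max' ⟨e.1, hmem1⟩ = e.2 := by
      have hm := Finset.max'_mem ({e.1, e.2} : Finset (Fin m)) ⟨e.1, hmem1⟩
      rw [Finset.mem_insert, Finset.mem_singleton] at hm
      rcases hm with h | h
      · exact absurd (lt_of_lt_of_le hlt' (h ▸ hmaxge)) (lt_irrefl _)
      · exact h
    exact Prod.ext hmin hmax
  case right_inv =>
    intro t ht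
    rw [Finset.mem_powersetCard] at ht
    have h1 := t.min'_mem (Finset.card_pos.mp (by omega))
    have h2 := t.max'_mem (Finset.card_pos.mp (by omega))
    apply Finset.eq_of_subset_of_card_le
    · intro x hx
      rw [Finset.mem_insert, Finset.mem_singleton] at hx
      rcases hx with rfl | rfl <;> assumption
    · simp only
      rw [Finset.card_insert_of_notMem (by
            rw [Finset.mem_singleton]
            have hlt := Finset.min'_lt_max'_of_card t (by omega)
            exact fun h => absurd (h ▸ hlt) (lt_irrefl _)), Finset.card_singleton]
      omega

lemma card_filter_val_lt {m a : ℕ} (ha : a ≤ m) :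
    ((univ : Finset (Fin m)).filter (fun i : Fin m => (i : ℕ) < a)).card = a := by
  have heq : (univ : Finset (Fin m)).filter (fun i : Fin m => (i : ℕ) < a)
      = (univ : Finset (Fin a)).map ⟨Fin.castLE ha, Fin.castLE_injective ha⟩ := by
    ext j
    simp only [Finset.mem_filter, Finset.mem_univ, true_and, Finset.mem_map,
      Function.Embedding.coeFn_mk]
    constructor
    · intro hj
      exact ⟨⟨(j : ℕ), hj⟩, by ext; rfl⟩
    · rintro ⟨i, -, rfl⟩
      exact i.2
  rw [heq, Finset.card_map, Finset.card_univ, Fintype.card_fin]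

lemma card_filter_val_ge {m b : ℕ} (hb : b ≤ m) :
    ((univ : Finset (Fin m)).filter (fun i : Fin m => m - b ≤ (i : ℕ))).card = b := by
  have heq : (univ : Finset (Fin m)).filter (fun i : Fin m => m - b ≤ (i : ℕ))
      = (univ : Finset (Fin b)).map ⟨fun i : Fin b => (⟨m - b + (i : ℕ), by omega⟩ : Fin m), by
          intro x y hxy
          have : m - b + (x : ℕ) = m - b + (y : ℕ) := congrArg Fin.val hxy
          ext; omega⟩ := by
    ext j
    simp only [Finset.mem_filter, Finset.mem_univ, true_and, Finset.mem_map,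
      Function.Embedding.coeFn_mk]
    constructor
    · intro hj
      refine ⟨⟨(j : ℕ) - (m - b), by omega⟩, by ext; show m - b + ((j : ℕ) - (m - b)) = j; omega⟩
    · rintro ⟨i, -, rfl⟩
      show m - b ≤ m - b + (i : ℕ); omega
  rw [heq, Finset.card_map, Finset.card_univ, Fintype.card_fin]



lemma fin3_cases : ∀ x : Fin 3, x = 0 ∨ x = 1 ∨ x = 2 := by decide

/-- Claim C: columns avoiding one `{0,1}`-pattern per ordered pair of rows, with
banned values on some rows. -/
lemma claimC : ∀ (n : ℕ) (α : Type) [Fintype α] [DecidableEq α],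
    Fintype.card α = n →
    ∀ (A : Finset (α → Fin 3)) (d : α → α → Fin 3 × Fin 3) (B : Finset α) (w : α → Fin 3),
    (∀ i j : α, i ≠ j → (d i j).2 ≠ 2) →
    (∀ c ∈ A, ∀ i j, i ≠ j → ¬(c i = (d i j).1 ∧ c j = (d i j).2)) →
    (∀ c ∈ A, ∀ i ∈ B, c i ≠ w i) →
    2 * A.card + B.card * 2 ^ n ≤ (n + 2) * 2 ^ n := by
  intro n
  induction n with
  | zero =>
    intro α _ _ hcard A d B w _ _ _
    have hempty : IsEmpty α := Fintype.card_eq_zero_iff.mp hcard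
    have hA : A.card ≤ 1 := by
      calc A.card ≤ Fintype.card (α → Fin 3) := Finset.card_le_univ A
      _ = 3 ^ Fintype.card α := by simp
      _ = 1 := by rw [hcard]; rfl
    have hB : B.card = 0 := by
      rw [Finset.card_eq_zero]
      ext i
      exact hempty.elim i
    omega
  | succ n ih =>
    intro α _ _ hcard A d B w hd hA hB
    have hne : Nonempty α := Fintype.card_pos_iff.mp (by omega)
    obtain ⟨a⟩ := hne
    have hcard' : Fintype.card {x : α // x ≠ a} = n := by
      have h1 := Fintype.card_subtype_compl (fun x : α => x = a)
      have h2 : Fintype.card {x : α // x = a} = 1 := Fintype.card_subtype_eq a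
      have h3 : Fintype.card {x : α // ¬ x = a} = Fintype.card {x : α // x ≠ a} := rfl
      omega
    set α' := {x : α // x ≠ a} with hα'
    -- the three slices
    have hres : ∀ v : Fin 3, ((A.filter (fun c => c a = v)).image
        (fun c (x : α') => c x.1)).card = (A.filter (fun c => c a = v)).card := by
      intro v
      apply Finset.card_image_of_injOn
      intro c hc c' hc' hcc
      simp only [Finset.mem_coe, Finset.mem_filter] at hc hc'
      funext x
      by_cases hx : x = a
      · rw [hx, hc.2, hc'.2]
      · exact congrFun hcc ⟨x, hx⟩
    set A0 := (A.filter (fun c => c a = 0)).image (fun c (x : α') => c x.1) with hA0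
    set A1 := (A.filter (fun c => c a = 1)).image (fun c (x : α') => c x.1) with hA1
    set A2 := (A.filter (fun c => c a = 2)).image (fun c (x : α') => c x.1) with hA2
    have hsplit : A.card = A0.card + A1.card + A2.card := by
      rw [hA0, hA1, hA2, hres 0, hres 1, hres 2]
      rw [Finset.card_eq_sum_card_fiberwise (f := fun c => c a) (t := univ)
        (fun c _ => Finset.mem_univ _)]
      rw [Fin.sum_univ_three]
    -- constraint data for the slices
    set d' : α' → α' → Fin 3 × Fin 3 := fun i j => d i.1 j.1 with hd'def
    have hd' : ∀ i j : α', i ≠ j → (d' i j).2 ≠ 2 := by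
      intro i j hij
      exact hd i.1 j.1 (fun h => hij (Subtype.ext h))
    set B' : Finset α' := univ.filter (fun i => i.1 ∈ B) with hB'def
    have hB'img : B'.image Subtype.val = B.erase a := by
      ext x
      simp only [hB'def, Finset.mem_image, Finset.mem_filter, Finset.mem_univ, true_and,
        Finset.mem_erase]
      constructor
      · rintro ⟨i, hi, rfl⟩
        exact ⟨i.2, hi⟩
      · rintro ⟨hxa, hxB⟩
        exact ⟨⟨x, hxa⟩, hxB, rfl⟩
    have hB'card : B'.card = (B.erase a).card := by
      rw [← hB'img]
      exact (Finset.card_image_of_injective _ Subtype.val_injective).symm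
    -- generic membership facts
    have hmem : ∀ (v : Fin 3) (c' : α' → Fin 3),
        c' ∈ (A.filter (fun c => c a = v)).image (fun c (x : α') => c x.1) →
        ∃ c ∈ A, c a = v ∧ ∀ x : α', c' x = c x.1 := by
      intro v c' hc'
      rw [Finset.mem_image] at hc'
      obtain ⟨c, hc, rfl⟩ := hc'
      rw [Finset.mem_filter] at hc
      exact ⟨c, hc.1, hc.2, fun x => rfl⟩
    -- pair constraints for slices
    have hA' : ∀ (v : Fin 3) (c' : α' → Fin 3),
        c' ∈ (A.filter (fun c => c a = v)).image (fun c (x : α') => c x.1) →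
        ∀ i j : α', i ≠ j → ¬(c' i = (d' i j).1 ∧ c' j = (d' i j).2) := by
      intro v c' hc' i j hij
      obtain ⟨c, hcA, -, hcv⟩ := hmem v c' hc'
      rw [hcv i, hcv j]
      exact hA c hcA i.1 j.1 (fun h => hij (Subtype.ext h))
    -- ban constraints: base ban set B' works for every slice
    have hBbase : ∀ (v : Fin 3) (c' : α' → Fin 3),
        c' ∈ (A.filter (fun c => c a = v)).image (fun c (x : α') => c x.1) →
        ∀ i ∈ B', c' i ≠ (fun i : α' => w i.1) i := by
      intro v c' hc' i hi
      obtain ⟨c, hcA, -, hcv⟩ := hmem v c' hc'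
      rw [Finset.mem_filter] at hi
      rw [hcv i]
      exact hB c hcA i.1 hi.2
    have x2pos : 0 < 2 ^ n := Nat.pow_pos (by norm_num)
    by_cases haB : a ∈ B
    -- CASE: the split row is banned
    · have hBcard : B'.card = B.card - 1 := by
        rw [hB'card, Finset.card_erase_of_mem haB]
      have hBpos : 1 ≤ B.card := Finset.card_pos.mpr ⟨a, haB⟩
      have hI : ∀ v : Fin 3, 2 * ((A.filter (fun c => c a = v)).image
          (fun c (x : α') => c x.1)).card + B'.card * 2 ^ n ≤ (n + 2) * 2 ^ n := by
        intro v
        exact ih α' hcard' _ d' B' (fun i => w i.1) hd' (hA' v) (hBbase v)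
      -- find which slice is empty
      have hzero : A0.card = 0 ∨ A1.card = 0 ∨ A2.card = 0 := by
        have hVe : ∀ v : Fin 3, w a = v → (A.filter (fun c => c a = v)).card = 0 := by
          intro v hv
          rw [Finset.card_eq_zero, Finset.filter_eq_empty_iff]
          intro c hc hcv
          exact hB c hc a haB (hv ▸ hcv)
        rcases fin3_cases (w a) with h | h | h
        · left; rw [hA0, hres 0]; exact hVe 0 h
        · right; left; rw [hA1, hres 1]; exact hVe 1 h
        · right; right; rw [hA2, hres 2]; exact hVe 2 h
      have I0 := hI 0; have I1 := hI 1; have I2 := hI 2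
      rw [← hA0] at I0; rw [← hA1] at I1; rw [← hA2] at I2
      have hcomb : ∀ u v : ℕ, A.card = u + v →
          2*u + B'.card * 2^n ≤ (n+2)*2^n → 2*v + B'.card*2^n ≤ (n+2)*2^n →
          2*A.card + B.card*2^(n+1) ≤ (n+1+2)*2^(n+1) := by
        intro u v huv hu hv
        have e : B.card = B'.card + 1 := by omega
        have hx : 2^(n+1) = 2^n * 2 := by ring
        rw [hx, huv, e]
        calc 2*(u+v) + (B'.card+1)*(2^n*2)
            = (2*u + B'.card*2^n) + (2*v + B'.card*2^n) + 2*2^n := by ring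
          _ ≤ (n+2)*2^n + (n+2)*2^n + 2*2^n :=
              Nat.add_le_add (Nat.add_le_add hu hv) le_rfl
          _ = (n+1+2)*(2^n*2) := by ring
      rcases hzero with h | h | h
      · exact hcomb A1.card A2.card (by omega) I1 I2
      · exact hcomb A0.card A2.card (by omega) I0 I2
      · exact hcomb A0.card A1.card (by omega) I0 I1
    -- CASE: the split row is unbanned
    · have hBcard : B'.card = B.card := by
        rw [hB'card, Finset.erase_eq_of_notMem haB]
      set X0 : Finset α' := univ.filter (fun i => (d i.1 a).2 = 0) with hX0
      set X1 : Finset α' := univ.filter (fun i => (d i.1 a).2 = 1) with hX1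
      have hXunion : B' ∪ X0 ∪ (B' ∪ X1) = (univ : Finset α') := by
        apply Finset.eq_univ_of_forall
        intro i
        rcases fin3_cases ((d i.1 a).2) with h | h | h
        · simp only [Finset.mem_union, hX0, Finset.mem_filter, Finset.mem_univ, true_and]
          tauto
        · simp only [Finset.mem_union, hX1, Finset.mem_filter, Finset.mem_univ, true_and]
          tauto
        · exact absurd h (hd i.1 a i.2)
      have hXcard : (B' ∪ X0).card + (B' ∪ X1).card ≥ n + B.card := by
        have h1 : (B' ∪ X0).card + (B' ∪ X1).card
            = ((B' ∪ X0) ∪ (B' ∪ X1)).card + ((B' ∪ X0) ∩ (B' ∪ X1)).card :=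
          (Finset.card_union_add_card_inter _ _).symm
        have h2 : ((B' ∪ X0) ∪ (B' ∪ X1)).card = n := by
          rw [hXunion, Finset.card_univ, hcard']
        have h3 : B' ⊆ (B' ∪ X0) ∩ (B' ∪ X1) := by
          intro i hi
          rw [Finset.mem_inter]
          exact ⟨Finset.mem_union_left _ hi, Finset.mem_union_left _ hi⟩
        have h4 := Finset.card_le_card h3
        omega
      -- bans for slices 0 and 1 with the new d-induced bans
      have hIv : ∀ (v : Fin 3) (X : Finset α'), (∀ i ∈ X, (d i.1 a).2 = v) →
          2 * ((A.filter (fun c => c a = v)).image (fun c (x : α') => c x.1)).card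
            + (B' ∪ X).card * 2 ^ n
            ≤ (n + 2) * 2 ^ n := by
        intro v X hX
        apply ih α' hcard' _ d' _ (fun i : α' => if i.1 ∈ B then w i.1 else (d i.1 a).1)
          hd' (hA' v)
        intro c' hc' i hi
        obtain ⟨c, hcA, hcv, hcres⟩ := hmem v c' hc'
        rw [Finset.mem_union] at hi
        rw [hcres i]
        by_cases hiB : i.1 ∈ B
        · rw [if_pos hiB]
          exact hB c hcA i.1 hiB
        · rw [if_neg hiB]
          have hiX : (d i.1 a).2 = v := by
            rcases hi with hi | hi
            · rw [hB'def, Finset.mem_filter] at hi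
              exact absurd hi.2 hiB
            · exact hX i hi
          intro hval
          exact hA c hcA i.1 a i.2 ⟨hval, by rw [hiX, hcv]⟩
      have I0 := hIv 0 X0 (fun i hi => by
        rw [hX0, Finset.mem_filter] at hi; exact hi.2)
      have I1 := hIv 1 X1 (fun i hi => by
        rw [hX1, Finset.mem_filter] at hi; exact hi.2)
      have I2 := ih α' hcard' _
        d' B' (fun i : α' => w i.1) hd' (hA' 2) (hBbase 2)
      rw [← hA0] at I0; rw [← hA1] at I1; rw [← hA2] at I2
      have hmul : (n + B.card) * 2^n ≤ (B' ∪ X0).card * 2^n + (B' ∪ X1).card * 2^n := by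
        rw [← add_mul]
        exact Nat.mul_le_mul_right _ hXcard
      have hsum : 2*A.card + ((B' ∪ X0).card * 2^n + (B' ∪ X1).card * 2^n + B'.card * 2^n)
          ≤ 3*((n+2)*2^n) := by
        calc 2*A.card + ((B' ∪ X0).card * 2^n + (B' ∪ X1).card * 2^n + B'.card * 2^n)
            = (2*A0.card + (B' ∪ X0).card * 2^n) + (2*A1.card + (B' ∪ X1).card * 2^n)
              + (2*A2.card + B'.card * 2^n) := by rw [hsplit]; ring
          _ ≤ (n+2)*2^n + (n+2)*2^n + (n+2)*2^n :=
              Nat.add_le_add (Nat.add_le_add I0 I1) I2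
          _ = 3*((n+2)*2^n) := by ring
      have final : 2*A.card + B.card*(2^n*2) + n*2^n ≤ (n+1+2)*(2^n*2) + n*2^n := by
        calc 2*A.card + B.card*(2^n*2) + n*2^n
            = 2*A.card + (((n + B.card) * 2^n) + B.card * 2^n) := by ring
          _ ≤ 2*A.card + (((B' ∪ X0).card * 2^n + (B' ∪ X1).card * 2^n) + B'.card * 2^n) := by
              apply Nat.add_le_add_left
              apply Nat.add_le_add hmul
              rw [hBcard]
          _ = 2*A.card + ((B' ∪ X0).card * 2^n + (B' ∪ X1).card * 2^n + B'.card * 2^n) := by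
              ring
          _ ≤ 3*((n+2)*2^n) := hsum
          _ = (n+1+2)*(2^n*2) + n*2^n := by ring
      have hx : 2^(n+1) = 2^n * 2 := by ring
      rw [hx]
      exact Nat.le_of_add_le_add_right final
/-- The upper bound: every pK2-avoider (in count form) is small. -/
theorem avoider_card_le {m p : ℕ} (hm : 1 ≤ m) (hp : 1 ≤ p)
    (A : Finset (Fin m → Fin 3))
    (hav : ∀ i j : Fin m, i ≠ j →
      ¬(p ≤ cnt A i j 0 0 ∧ p ≤ cnt A i j 1 0 ∧ p ≤ cnt A i j 0 1 ∧ p ≤ cnt A i j 1 1)) :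
    A.card ≤ 2 ^ m + m * 2 ^ (m - 1) + (p - 1) * m.choose 2 := by
  -- choose a deficient pattern for each ordered pair
  have hch : ∀ i j : Fin m, ∃ uv : Fin 3 × Fin 3,
      (i ≠ j → (uv.1 ≠ 2 ∧ uv.2 ≠ 2 ∧ cnt A i j uv.1 uv.2 ≤ p - 1)) := by
    intro i j
    by_cases hij : i ≠ j
    · have := hav i j hij
      by_cases h1 : p ≤ cnt A i j 0 0
      · by_cases h2 : p ≤ cnt A i j 1 0
        · by_cases h3 : p ≤ cnt A i j 0 1
          · refine ⟨(1, 1), fun _ => ⟨by decide, by decide, ?_⟩⟩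
            have h4 : ¬ p ≤ cnt A i j 1 1 := fun h4 => this ⟨h1, h2, h3, h4⟩
            show cnt A i j 1 1 ≤ p - 1
            omega
          · refine ⟨(0, 1), fun _ => ⟨by decide, by decide, ?_⟩⟩
            show cnt A i j 0 1 ≤ p - 1
            omega
        · refine ⟨(1, 0), fun _ => ⟨by decide, by decide, ?_⟩⟩
          show cnt A i j 1 0 ≤ p - 1
          omega
      · refine ⟨(0, 0), fun _ => ⟨by decide, by decide, ?_⟩⟩
        show cnt A i j 0 0 ≤ p - 1
        omega
    · exact ⟨(0, 0), fun h => absurd h (by simpa using hij)⟩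
  choose D hD using hch
  -- symmetrized constraint
  set A' := A.filter (fun c => ∀ i j : Fin m, (i : ℕ) < (j : ℕ) →
    ¬(c i = (D i j).1 ∧ c j = (D i j).2)) with hA'
  have hA'le : A'.card ≤ 2 ^ m + m * 2 ^ (m - 1) := by
    have hcl := claimC m (Fin m) (by simp) A'
      (fun i j => if (i : ℕ) < (j : ℕ) then D i j else ((D j i).2, (D j i).1)) ∅ (fun _ => 0)
      (by
        intro i j hij
        by_cases h : (i : ℕ) < (j : ℕ)
        · rw [if_pos h]
          exact ((hD i j hij).2.1)
        · rw [if_neg h]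
          have hji : (j : ℕ) < (i : ℕ) := by
            have : (i : ℕ) ≠ (j : ℕ) := fun hh => hij (Fin.ext hh)
            omega
          exact ((hD j i (Ne.symm hij)).1))
      (by
        intro c hc i j hij
        rw [hA', Finset.mem_filter] at hc
        by_cases h : (i : ℕ) < (j : ℕ)
        · rw [if_pos h]
          exact hc.2 i j h
        · rw [if_neg h]
          have hji : (j : ℕ) < (i : ℕ) := by
            have : (i : ℕ) ≠ (j : ℕ) := fun hh => hij (Fin.ext hh)
            omega
          intro ⟨hx, hy⟩
          exact hc.2 j i hji ⟨hy, hx⟩)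
      (by intro c _ i hi; exact absurd hi (Finset.notMem_empty i))
    simp only [Finset.card_empty, zero_mul, add_zero] at hcl
    -- 2 * A'.card ≤ (m+2) * 2^m ; and 2^m = 2 * 2^(m-1)
    have hpow : 2 ^ m = 2 * 2 ^ (m - 1) := by
      obtain ⟨k, rfl⟩ : ∃ k, m = k + 1 := ⟨m - 1, by omega⟩
      rw [Nat.add_sub_cancel, pow_succ]
      ring
    have : 2 * A'.card ≤ 2 * (2 ^ m + m * 2 ^ (m - 1)) := by
      calc 2 * A'.card ≤ (m + 2) * 2 ^ m := hcl
      _ = 2 * (2 ^ m + m * 2 ^ (m - 1)) := by rw [hpow]; ring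
    omega
  -- the removed columns
  set pairs := ((univ ×ˢ univ : Finset (Fin m × Fin m)).filter
    (fun e => (e.1 : ℕ) < (e.2 : ℕ))) with hpairs
  have hsub : A \ A' ⊆ pairs.biUnion
      (fun e => A.filter (fun c => c e.1 = (D e.1 e.2).1 ∧ c e.2 = (D e.1 e.2).2)) := by
    intro c hc
    rw [Finset.mem_sdiff, hA', Finset.mem_filter] at hc
    have hcA := hc.1
    have : ¬ (∀ i j : Fin m, (i : ℕ) < (j : ℕ) →
        ¬(c i = (D i j).1 ∧ c j = (D i j).2)) := fun h => hc.2 ⟨hcA, h⟩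
    push_neg at this
    obtain ⟨i, j, hij, hpat⟩ := this
    rw [Finset.mem_biUnion]
    refine ⟨(i, j), ?_, ?_⟩
    · rw [hpairs, Finset.mem_filter]
      exact ⟨Finset.mem_product.mpr ⟨Finset.mem_univ _, Finset.mem_univ _⟩, hij⟩
    · rw [Finset.mem_filter]
      exact ⟨hcA, hpat⟩
  have hdel : (A \ A').card ≤ (p - 1) * m.choose 2 := by
    calc (A \ A').card ≤ (pairs.biUnion _).card := Finset.card_le_card hsub
    _ ≤ ∑ e ∈ pairs, (A.filter (fun c => c e.1 = (D e.1 e.2).1 ∧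
          c e.2 = (D e.1 e.2).2)).card := Finset.card_biUnion_le
    _ ≤ ∑ _e ∈ pairs, (p - 1) := by
        apply Finset.sum_le_sum
        intro e he
        rw [hpairs, Finset.mem_filter] at he
        have hij : e.1 ≠ e.2 := by
          intro h
          rw [h] at he
          omega
        exact (hD e.1 e.2 hij).2.2
    _ = pairs.card * (p - 1) := by rw [Finset.sum_const, smul_eq_mul]
    _ = (p - 1) * m.choose 2 := by
        rw [hpairs, card_pairs_lt, Finset.card_univ, Fintype.card_fin, Nat.mul_comm]
  have hpart : (A \ A').card + A'.card = A.card :=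
    Finset.card_sdiff_add_card_eq_card (Finset.filter_subset _ _)
  omega



lemma testBit_eq_of_lt {s t n : ℕ} (hs : s < 2 ^ n) (ht : t < 2 ^ n)
    (h : ∀ k, k < n → s.testBit k = t.testBit k) : s = t := by
  apply Nat.eq_of_testBit_eq
  intro k
  by_cases hk : k < n
  · exact h k hk
  · rw [Nat.testBit_eq_false_of_lt, Nat.testBit_eq_false_of_lt]
    · exact lt_of_lt_of_le ht (Nat.pow_le_pow_right (by norm_num) (by omega))
    · exact lt_of_lt_of_le hs (Nat.pow_le_pow_right (by norm_num) (by omega))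

variable (m a b : ℕ)

/-- slot index with a punched hole -/
def phi (i x : ℕ) : ℕ := if x < i then x else x - 1

/-- pair-columns for a pair inside S₁ (both rows `< a`): 0 at the pair, 0/2-encoding
on rows `[a, a + (a+b-2))`, 2 elsewhere. -/
def encS1 (i j : Fin m) (t : ℕ) : Fin m → Fin 3 := fun x =>
  if x = i ∨ x = j then 0
  else if a ≤ (x : ℕ) ∧ (x : ℕ) < a + (a + b - 2) ∧ t.testBit ((x : ℕ) - a) then 0 else 2

/-- pair-columns for a pair inside S₂ (both rows `≥ m - b`): 1 at the pair,
1/2-encoding on rows `< a+b-2`, 2 elsewhere. -/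
def encS2 (i j : Fin m) (t : ℕ) : Fin m → Fin 3 := fun x =>
  if x = i ∨ x = j then 1
  else if (x : ℕ) < a + b - 2 ∧ t.testBit (x : ℕ) then 1 else 2

/-- pair-columns for the remaining pairs `i < j`: 0 at `i`, 1 at `j`, 1/2-encoding on
`S₁ \ {i}` and 0/2-encoding on `S₂ \ {j}`, 2 elsewhere. -/
def encSig (i j : Fin m) (t : ℕ) : Fin m → Fin 3 := fun x =>
  if x = i then 0 else if x = j then 1
  else if (x : ℕ) < a ∧ phi (i : ℕ) (x : ℕ) < a - 1 then
    (if t.testBit (phi (i : ℕ) (x : ℕ)) then 1 else 2)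
  else if m - b ≤ (x : ℕ) ∧ phi (m - 1 - (j : ℕ)) (m - 1 - (x : ℕ)) < b - 1 then
    (if t.testBit ((a - 1) + phi (m - 1 - (j : ℕ)) (m - 1 - (x : ℕ))) then 0 else 2)
  else 2

def enc (e : Fin m × Fin m) (t : ℕ) : Fin m → Fin 3 :=
  if (e.2 : ℕ) < a then encS1 m a b e.1 e.2 t
  else if m - b ≤ (e.1 : ℕ) then encS2 m a b e.1 e.2 t
  else encSig m a b e.1 e.2 t

variable {m a b}

/-! ### value facts -/

lemma encS1_ne_one (i j : Fin m) (t : ℕ) (x : Fin m) : encS1 m a b i j t x ≠ 1 := by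
  unfold encS1
  split_ifs <;> decide

lemma encS1_zero (i j : Fin m) (t : ℕ) (x : Fin m) (h : encS1 m a b i j t x = 0) :
    x = i ∨ x = j ∨ a ≤ (x : ℕ) := by
  unfold encS1 at h
  split_ifs at h with h1 h2
  · tauto
  · exact Or.inr (Or.inr h2.1)
  · exact absurd h (by decide)

lemma encS2_ne_zero (i j : Fin m) (t : ℕ) (x : Fin m) : encS2 m a b i j t x ≠ 0 := by
  unfold encS2
  split_ifs <;> decide

lemma encS2_one (i j : Fin m) (t : ℕ) (x : Fin m) (h : encS2 m a b i j t x = 1) :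
    x = i ∨ x = j ∨ (x : ℕ) < a + b - 2 := by
  unfold encS2 at h
  split_ifs at h with h1 h2
  · tauto
  · exact Or.inr (Or.inr h2.1)
  · exact absurd h (by decide)

lemma encSig_zero (i j : Fin m) (t : ℕ) (x : Fin m) (h : encSig m a b i j t x = 0) :
    x = i ∨ m - b ≤ (x : ℕ) := by
  unfold encSig at h
  split_ifs at h <;> first | exact absurd h (by decide) | tauto

lemma encSig_one (i j : Fin m) (t : ℕ) (x : Fin m) (h : encSig m a b i j t x = 1) :
    x = j ∨ (x : ℕ) < a := by
  unfold encSig at h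
  split_ifs at h <;> first | exact absurd h (by decide) | tauto

lemma encS1_self (i j : Fin m) (t : ℕ) :
    encS1 m a b i j t i = 0 ∧ encS1 m a b i j t j = 0 := by
  constructor <;> (unfold encS1; rw [if_pos]; tauto)

lemma encS2_self (i j : Fin m) (t : ℕ) :
    encS2 m a b i j t i = 1 ∧ encS2 m a b i j t j = 1 := by
  constructor <;> (unfold encS2; rw [if_pos]; tauto)

lemma encSig_self (i j : Fin m) (hij : i ≠ j) (t : ℕ) :
    encSig m a b i j t i = 0 ∧ encSig m a b i j t j = 1 := by
  constructor
  · unfold encSig; rw [if_pos rfl]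
  · unfold encSig; rw [if_neg (fun h => hij h.symm), if_pos rfl]


/-! ### injectivity -/

lemma encS1_inj {i j : Fin m} (hj : (j : ℕ) < a) (hi : (i : ℕ) < (j : ℕ))
    (hma : a + (a + b - 2) ≤ m)
    {s t : ℕ} (hs : s < 2 ^ (a + b - 2)) (ht : t < 2 ^ (a + b - 2))
    (h : encS1 m a b i j s = encS1 m a b i j t) : s = t := by
  apply testBit_eq_of_lt hs ht
  intro k hk
  have hx : a + k < m := by omega
  have hcong := congrFun h ⟨a + k, hx⟩
  set x : Fin m := ⟨a + k, hx⟩ with hxdef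
  have hxk : (x : ℕ) = a + k := rfl
  have hxi : ¬(x = i ∨ x = j) := by
    rintro (hxe | hxe) <;> (rw [hxe] at hxk; omega)
  unfold encS1 at hcong
  rw [if_neg hxi, if_neg hxi] at hcong
  have hxv : (x : ℕ) = a + k := rfl
  rw [hxv] at hcong
  have e1 : a ≤ a + k := by omega
  have e2 : a + k < a + (a + b - 2) := by omega
  have e3 : a + k - a = k := by omega
  rw [e3] at hcong
  by_cases hbs : s.testBit k <;> by_cases hbt : t.testBit k <;>
    simp [hbs, hbt, e1, e2] at hcong ⊢

lemma encS2_inj {i j : Fin m} (hi : m - b ≤ (i : ℕ)) (hij : (i : ℕ) < (j : ℕ))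
    (hmb : a + b - 2 ≤ m - b) (hm : 1 ≤ m)
    {s t : ℕ} (hs : s < 2 ^ (a + b - 2)) (ht : t < 2 ^ (a + b - 2))
    (h : encS2 m a b i j s = encS2 m a b i j t) : s = t := by
  apply testBit_eq_of_lt hs ht
  intro k hk
  have hx : k < m := by omega
  have hcong := congrFun h ⟨k, hx⟩
  set x : Fin m := ⟨k, hx⟩ with hxdef
  have hxk : (x : ℕ) = k := rfl
  have hxi : ¬(x = i ∨ x = j) := by
    rintro (hxe | hxe) <;> (rw [hxe] at hxk; omega)
  unfold encS2 at hcong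
  rw [if_neg hxi, if_neg hxi] at hcong
  have hxv : (x : ℕ) = k := rfl
  rw [hxv] at hcong
  by_cases hbs : s.testBit k <;> by_cases hbt : t.testBit k <;>
    simp [hbs, hbt, hk] at hcong ⊢

lemma encSig_inj {i j : Fin m} (hj : a ≤ (j : ℕ)) (hi : (i : ℕ) < m - b)
    (hij : (i : ℕ) < (j : ℕ)) (hab : a + b ≤ m) (ha : 1 ≤ a) (hb : 1 ≤ b)
    {s t : ℕ} (hs : s < 2 ^ (a + b - 2)) (ht : t < 2 ^ (a + b - 2))
    (h : encSig m a b i j s = encSig m a b i j t) : s = t := by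
  apply testBit_eq_of_lt hs ht
  intro k hk
  by_cases hklo : k < a - 1
  -- low bits, recovered in S₁ \ {i}
  · have hxval : (if k < (i : ℕ) then k else k + 1) < m := by
      split_ifs <;> omega
    set xv : ℕ := if k < (i : ℕ) then k else k + 1 with hxv
    have hxa : xv < a := by
      rw [hxv]; split_ifs with hki
      · omega
      · -- k ≥ i, so i < a necessarily? i < m-b; if i ≥ a then k < a-1 ≤ i contradiction
        by_cases hia : (i : ℕ) < a
        · omega
        · omega
    have hxm : xv < m := by omega
    have hcong := congrFun h ⟨xv, hxm⟩
    set x : Fin m := ⟨xv, hxm⟩ with hxdef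
    have hx1 : ¬ x = i := by
      intro hxi
      have : (x : ℕ) = (i : ℕ) := by rw [hxi]
      have hxx : (x : ℕ) = xv := rfl
      rw [hxx, hxv] at this
      split_ifs at this <;> omega
    have hx2 : ¬ x = j := by
      intro hxj
      have : (x : ℕ) = (j : ℕ) := by rw [hxj]
      have hxx : (x : ℕ) = xv := rfl
      omega
    have hphi : phi (i : ℕ) xv = k := by
      rw [phi, hxv]
      by_cases hki : k < (i : ℕ)
      · rw [if_pos hki, if_pos hki]
      · rw [if_neg hki, if_neg (by omega : ¬ k + 1 < (i : ℕ))]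
        omega
    unfold encSig at hcong
    rw [if_neg hx1, if_neg hx1, if_neg hx2, if_neg hx2] at hcong
    have hxx : (x : ℕ) = xv := rfl
    rw [hxx, hphi] at hcong
    have hcnd : xv < a ∧ k < a - 1 := ⟨hxa, hklo⟩
    simp only [if_pos hcnd] at hcong
    by_cases hbs : s.testBit k <;> by_cases hbt : t.testBit k <;>
      simp [hbs, hbt] at hcong ⊢
  -- high bits, recovered in S₂ \ {j}
  · have hk' : k - (a - 1) < b - 1 := by omega
    set kp : ℕ := k - (a - 1) with hkp
    set jp : ℕ := m - 1 - (j : ℕ) with hjp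
    set xp : ℕ := if kp < jp then kp else kp + 1 with hxp
    have hxpb : xp ≤ b - 1 := by
      rw [hxp]; split_ifs <;> omega
    have hxval : m - 1 - xp < m := by omega
    have hcong := congrFun h ⟨m - 1 - xp, hxval⟩
    set x : Fin m := ⟨m - 1 - xp, hxval⟩ with hxdef
    have hxx : (x : ℕ) = m - 1 - xp := rfl
    have hxSb : m - b ≤ (x : ℕ) := by omega
    have hx1 : ¬ x = i := by
      intro hxi
      have : (x : ℕ) = (i : ℕ) := by rw [hxi]
      omega
    have hx2 : ¬ x = j := by
      intro hxj
      have hje : (x : ℕ) = (j : ℕ) := by rw [hxj]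
      rw [hxx] at hje
      have hjm : (j : ℕ) < m := j.2
      have hjpe : (j : ℕ) = m - 1 - jp := by omega
      have : xp = jp := by omega
      rw [hxp] at this
      split_ifs at this <;> omega
    have hmx : m - 1 - (x : ℕ) = xp := by
      rw [hxx]; omega
    have hphi : phi jp xp = kp := by
      rw [phi, hxp]
      by_cases hkj : kp < jp
      · rw [if_pos hkj, if_pos hkj]
      · rw [if_neg hkj, if_neg (by omega : ¬ kp + 1 < jp)]
        omega
    have hnotlow : ¬ ((x : ℕ) < a ∧ phi (i : ℕ) (x : ℕ) < a - 1) := by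
      rintro ⟨hxa, -⟩
      rw [hxx] at hxa
      omega
    unfold encSig at hcong
    rw [if_neg hx1, if_neg hx1, if_neg hx2, if_neg hx2] at hcong
    rw [if_neg hnotlow, if_neg hnotlow] at hcong
    rw [← hjp, hmx, hphi] at hcong
    have hcnd : m - b ≤ (x : ℕ) ∧ kp < b - 1 := ⟨hxSb, hk'⟩
    simp only [if_pos hcnd] at hcong
    have hke : a - 1 + kp = k := by omega
    rw [hke] at hcong
    by_cases hbs : s.testBit k <;> by_cases hbt : t.testBit k <;>
      simp [hbs, hbt] at hcong ⊢


/-! ### base families -/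

def T2 (m a : ℕ) : Finset (Fin m → Fin 3) := (Finset.range a).biUnion (fun z =>
  Fintype.piFinset (fun i : Fin m =>
    if (i : ℕ) = z then {0} else if (i : ℕ) < a then {1, 2} else {0, 2}))

def T3 (m b : ℕ) : Finset (Fin m → Fin 3) := (Finset.range b).biUnion (fun u =>
  Fintype.piFinset (fun i : Fin m =>
    if (i : ℕ) = m - 1 - u then {1} else if m - b ≤ (i : ℕ) then {0, 2} else {1, 2}))

def T4a (m a : ℕ) : Finset (Fin m → Fin 3) :=
  Fintype.piFinset (fun i : Fin m => if (i : ℕ) < a then ({1, 2} : Finset (Fin 3)) else {0, 2})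

def T4b (m a b : ℕ) : Finset (Fin m → Fin 3) := (Finset.Ico a (m - b)).biUnion (fun k =>
  Fintype.piFinset (fun i : Fin m =>
    if (i : ℕ) = k then {1} else if (i : ℕ) < k then {1, 2} else {0, 2}))

def Base (m a b : ℕ) : Finset (Fin m → Fin 3) := T2 m a ∪ T3 m b ∪ T4a m a ∪ T4b m a b

lemma ne0_of_mem12 {y : Fin 3} (h : y ∈ ({1, 2} : Finset (Fin 3))) : y ≠ 0 := by
  revert y; decide

lemma ne1_of_mem02 {y : Fin 3} (h : y ∈ ({0, 2} : Finset (Fin 3))) : y ≠ 1 := by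
  revert y; decide

lemma eq0_of_mem0 {y : Fin 3} (h : y ∈ ({0} : Finset (Fin 3))) : y = 0 := by
  revert y; decide

lemma eq1_of_mem1 {y : Fin 3} (h : y ∈ ({1} : Finset (Fin 3))) : y = 1 := by
  revert y; decide

/-- the base avoids all three kinds of signature patterns. -/
lemma base_no_sig (hab : a + b ≤ m) (hb : 1 ≤ b) {c : Fin m → Fin 3}
    (hc : c ∈ Base m a b) (i j : Fin m) (hij : (i : ℕ) < (j : ℕ)) :
    ((j : ℕ) < a → ¬(c i = 0 ∧ c j = 0)) ∧
    (m - b ≤ (i : ℕ) → ¬(c i = 1 ∧ c j = 1)) ∧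
    (a ≤ (j : ℕ) → (i : ℕ) < m - b → ¬(c i = 0 ∧ c j = 1)) := by
  have hiv : (i : ℕ) < m := i.2
  have hjv : (j : ℕ) < m := j.2
  unfold Base at hc
  rw [Finset.mem_union, Finset.mem_union, Finset.mem_union] at hc
  rcases hc with ((hc | hc) | hc) | hc
  -- T2
  · unfold T2 at hc
    rw [Finset.mem_biUnion] at hc
    obtain ⟨z, hz, hmem⟩ := hc
    rw [Finset.mem_range] at hz
    rw [Fintype.mem_piFinset] at hmem
    have hci := hmem i
    have hcj := hmem j
    refine ⟨?_, ?_, ?_⟩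
    · intro hja ⟨h0i, h0j⟩
      by_cases hiz : (i : ℕ) = z
      · rw [if_neg (by omega), if_pos (by omega)] at hcj
        exact ne0_of_mem12 hcj h0j
      · rw [if_neg hiz, if_pos (by omega)] at hci
        exact ne0_of_mem12 hci h0i
    · intro hi1 ⟨h1i, _⟩
      rw [if_neg (by omega), if_neg (by omega)] at hci
      exact ne1_of_mem02 hci h1i
    · intro hja hi1 ⟨_, h1j⟩
      rw [if_neg (by omega), if_neg (by omega)] at hcj
      exact ne1_of_mem02 hcj h1j
  -- T3
  · unfold T3 at hc
    rw [Finset.mem_biUnion] at hc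
    obtain ⟨u, hu, hmem⟩ := hc
    rw [Finset.mem_range] at hu
    rw [Fintype.mem_piFinset] at hmem
    have hci := hmem i
    have hcj := hmem j
    have hw : m - b ≤ m - 1 - u := by omega
    refine ⟨?_, ?_, ?_⟩
    · intro hja ⟨h0i, h0j⟩
      rw [if_neg (by omega), if_neg (by omega)] at hcj
      exact ne0_of_mem12 hcj h0j
    · intro hi1 ⟨h1i, h1j⟩
      by_cases hiw : (i : ℕ) = m - 1 - u
      · rw [if_neg (show ¬(j : ℕ) = m - 1 - u by omega),
          if_pos (show m - b ≤ (j : ℕ) by omega)] at hcj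
        exact ne1_of_mem02 hcj h1j
      · rw [if_neg hiw, if_pos (by omega)] at hci
        exact ne1_of_mem02 hci h1i
    · intro hja hi1 ⟨h0i, _⟩
      rw [if_neg (by omega), if_neg (by omega)] at hci
      exact ne0_of_mem12 hci h0i
  -- T4a
  · unfold T4a at hc
    rw [Fintype.mem_piFinset] at hc
    have hci := hc i
    have hcj := hc j
    refine ⟨?_, ?_, ?_⟩
    · intro hja ⟨h0i, h0j⟩
      rw [if_pos (by omega)] at hcj
      exact ne0_of_mem12 hcj h0j
    · intro hi1 ⟨h1i, _⟩
      rw [if_neg (by omega)] at hci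
      exact ne1_of_mem02 hci h1i
    · intro hja hi1 ⟨_, h1j⟩
      rw [if_neg (by omega)] at hcj
      exact ne1_of_mem02 hcj h1j
  -- T4b
  · unfold T4b at hc
    rw [Finset.mem_biUnion] at hc
    obtain ⟨k, hk, hmem⟩ := hc
    rw [Finset.mem_Ico] at hk
    rw [Fintype.mem_piFinset] at hmem
    have hci := hmem i
    have hcj := hmem j
    refine ⟨?_, ?_, ?_⟩
    · intro hja ⟨h0i, h0j⟩
      rw [if_neg (by omega), if_pos (by omega)] at hcj
      exact ne0_of_mem12 hcj h0j
    · intro hi1 ⟨h1i, _⟩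
      rw [if_neg (by omega), if_neg (by omega)] at hci
      exact ne1_of_mem02 hci h1i
    · intro hja hi1 ⟨h0i, h1j⟩
      -- c i = 0 forces k < i ; c j = 1 forces j ≤ k ; contradiction with i < j
      have hki : k < (i : ℕ) := by
        by_cases h1 : (i : ℕ) = k
        · rw [if_pos h1] at hci
          rw [eq1_of_mem1 hci] at h0i
          exact absurd h0i (by decide)
        · by_cases h2 : (i : ℕ) < k
          · rw [if_neg h1, if_pos h2] at hci
            exact absurd h0i (ne0_of_mem12 hci)
          · omega
      have hjk : (j : ℕ) ≤ k := by
        by_cases h1 : (j : ℕ) = k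
        · omega
        · by_cases h2 : (j : ℕ) < k
          · omega
          · rw [if_neg h1, if_neg h2] at hcj
            exact absurd h1j (ne1_of_mem02 hcj)
      omega


/-! ### pair families -/

def capP (p q0 q1 m a b : ℕ) (e : Fin m × Fin m) : ℕ :=
  if (e.2 : ℕ) < a then p - 1 - q0 else if m - b ≤ (e.1 : ℕ) then p - 1 - q1 else p - 1

def Pfam (p q0 q1 m a b : ℕ) (e : Fin m × Fin m) : Finset (Fin m → Fin 3) :=
  (Finset.range (capP p q0 q1 m a b e)).image (enc m a b e)

def pairsF (m : ℕ) : Finset (Fin m × Fin m) :=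
  (univ ×ˢ univ).filter (fun e => (e.1 : ℕ) < (e.2 : ℕ))

lemma mem_pairsF {m : ℕ} {e : Fin m × Fin m} : e ∈ pairsF m ↔ (e.1 : ℕ) < (e.2 : ℕ) := by
  unfold pairsF
  rw [Finset.mem_filter]
  simp

def Astar (p q0 q1 m a b : ℕ) : Finset (Fin m → Fin 3) :=
  Base m a b ∪ (pairsF m).biUnion (Pfam p q0 q1 m a b)

/-- pair-family columns only show the signature pattern of their own pair. -/
lemma cross_no_sig (hab : a + b ≤ m) (hmb : a + 2 * b ≤ m + 2)
    {f : Fin m × Fin m} (hf : (f.1 : ℕ) < (f.2 : ℕ)) (t : ℕ)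
    {e : Fin m × Fin m} (he : (e.1 : ℕ) < (e.2 : ℕ)) (hne : e ≠ f) :
    ((e.2 : ℕ) < a → ¬(enc m a b f t e.1 = 0 ∧ enc m a b f t e.2 = 0)) ∧
    (m - b ≤ (e.1 : ℕ) → ¬(enc m a b f t e.1 = 1 ∧ enc m a b f t e.2 = 1)) ∧
    (a ≤ (e.2 : ℕ) → (e.1 : ℕ) < m - b → ¬(enc m a b f t e.1 = 0 ∧ enc m a b f t e.2 = 1)) := by
  have hprod : ∀ x y : Fin m × Fin m, x.1 = y.1 → x.2 = y.2 → x = y := by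
    intro x y h1 h2
    exact Prod.ext h1 h2
  unfold enc
  by_cases hfk1 : (f.2 : ℕ) < a
  · rw [if_pos hfk1]
    refine ⟨?_, ?_, ?_⟩
    · intro hea ⟨h1, h2⟩
      have z1 := encS1_zero f.1 f.2 t e.1 h1
      have z2 := encS1_zero f.1 f.2 t e.2 h2
      have hv1 : e.1 = f.1 ∨ e.1 = f.2 := by
        rcases z1 with h | h | h
        · exact Or.inl h
        · exact Or.inr h
        · omega
      have hv2 : e.2 = f.1 ∨ e.2 = f.2 := by
        rcases z2 with h | h | h
        · exact Or.inl h
        · exact Or.inr h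
        · omega
      apply hne
      rcases hv1 with h1' | h1' <;> rcases hv2 with h2' | h2'
      · exfalso
        have : (e.1 : ℕ) = (e.2 : ℕ) := by rw [h1', h2']
        omega
      · exact hprod _ _ h1' h2'
      · exfalso
        have hx : (e.1 : ℕ) = (f.2 : ℕ) := by rw [h1']
        have hy : (e.2 : ℕ) = (f.1 : ℕ) := by rw [h2']
        omega
      · exfalso
        have : (e.1 : ℕ) = (e.2 : ℕ) := by rw [h1', h2']
        omega
    · intro hi1 ⟨h1, _⟩
      exact encS1_ne_one f.1 f.2 t e.1 h1
    · intro _ _ ⟨_, h2⟩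
      exact encS1_ne_one f.1 f.2 t e.2 h2
  · rw [if_neg hfk1]
    by_cases hfk2 : m - b ≤ (f.1 : ℕ)
    · rw [if_pos hfk2]
      refine ⟨?_, ?_, ?_⟩
      · intro _ ⟨h1, _⟩
        exact encS2_ne_zero f.1 f.2 t e.1 h1
      · intro hi1 ⟨h1, h2⟩
        have z1 := encS2_one f.1 f.2 t e.1 h1
        have z2 := encS2_one f.1 f.2 t e.2 h2
        have hv1 : e.1 = f.1 ∨ e.1 = f.2 := by
          rcases z1 with h | h | h
          · exact Or.inl h
          · exact Or.inr h
          · omega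
        have hv2 : e.2 = f.1 ∨ e.2 = f.2 := by
          rcases z2 with h | h | h
          · exact Or.inl h
          · exact Or.inr h
          · omega
        apply hne
        rcases hv1 with h1' | h1' <;> rcases hv2 with h2' | h2'
        · exfalso
          have : (e.1 : ℕ) = (e.2 : ℕ) := by rw [h1', h2']
          omega
        · exact hprod _ _ h1' h2'
        · exfalso
          have hx : (e.1 : ℕ) = (f.2 : ℕ) := by rw [h1']
          have hy : (e.2 : ℕ) = (f.1 : ℕ) := by rw [h2']
          omega
        · exfalso
          have : (e.1 : ℕ) = (e.2 : ℕ) := by rw [h1', h2']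
          omega
      · intro _ _ ⟨h1, _⟩
        exact encS2_ne_zero f.1 f.2 t e.1 h1
    · rw [if_neg hfk2]
      refine ⟨?_, ?_, ?_⟩
      · intro hea ⟨h1, h2⟩
        have z1 := encSig_zero f.1 f.2 t e.1 h1
        have z2 := encSig_zero f.1 f.2 t e.2 h2
        have hv1 : e.1 = f.1 := by
          rcases z1 with h | h
          · exact h
          · omega
        have hv2 : e.2 = f.1 := by
          rcases z2 with h | h
          · exact h
          · omega
        have : (e.1 : ℕ) = (e.2 : ℕ) := by rw [hv1, hv2]
        omega
      · intro hi1 ⟨h1, h2⟩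
        have z1 := encSig_one f.1 f.2 t e.1 h1
        have z2 := encSig_one f.1 f.2 t e.2 h2
        have hv1 : e.1 = f.2 := by
          rcases z1 with h | h
          · exact h
          · omega
        have hv2 : e.2 = f.2 := by
          rcases z2 with h | h
          · exact h
          · omega
        have : (e.1 : ℕ) = (e.2 : ℕ) := by rw [hv1, hv2]
        omega
      · intro hea hi1 ⟨h1, h2⟩
        have z1 := encSig_zero f.1 f.2 t e.1 h1
        have z2 := encSig_one f.1 f.2 t e.2 h2
        have hv1 : e.1 = f.1 := by
          rcases z1 with h | h
          · exact h
          · omega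
        have hv2 : e.2 = f.2 := by
          rcases z2 with h | h
          · exact h
          · omega
        exact hne (hprod _ _ hv1 hv2)

/-- pair-family columns do show their own pattern. -/
lemma own_sig (hab : a + b ≤ m) {f : Fin m × Fin m} (hf : (f.1 : ℕ) < (f.2 : ℕ)) (t : ℕ) :
    ((f.2 : ℕ) < a → enc m a b f t f.1 = 0 ∧ enc m a b f t f.2 = 0) ∧
    (m - b ≤ (f.1 : ℕ) → enc m a b f t f.1 = 1 ∧ enc m a b f t f.2 = 1) ∧
    (¬ (f.2 : ℕ) < a → ¬ m - b ≤ (f.1 : ℕ) →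
      enc m a b f t f.1 = 0 ∧ enc m a b f t f.2 = 1) := by
  have hne : f.1 ≠ f.2 := by
    intro h
    rw [h] at hf
    omega
  unfold enc
  refine ⟨?_, ?_, ?_⟩
  · intro h1
    rw [if_pos h1]
    exact encS1_self f.1 f.2 t
  · intro h2
    by_cases h1 : (f.2 : ℕ) < a
    · exfalso
      omega
    · rw [if_neg h1, if_pos h2]
      exact encS2_self f.1 f.2 t
  · intro h1 h2
    rw [if_neg h1, if_neg h2]
    exact encSig_self f.1 f.2 hne t


/-! ### cardinalities of the pair families -/

lemma capP_le {p q0 q1 m a b : ℕ} (e : Fin m × Fin m) : capP p q0 q1 m a b e ≤ p - 1 := by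
  unfold capP
  split_ifs <;> omega

lemma pfam_card {p q0 q1 m a b : ℕ} (hm : 1 ≤ m) (ha : 1 ≤ a) (hb : 1 ≤ b)
    (hab : a + b ≤ m) (hma : 2 * a + b ≤ m + 2) (hmb : a + 2 * b ≤ m + 2)
    (hcap : p - 1 ≤ 2 ^ (a + b - 2)) {e : Fin m × Fin m} (he : e ∈ pairsF m) :
    (Pfam p q0 q1 m a b e).card = capP p q0 q1 m a b e := by
  have he' := mem_pairsF.mp he
  have hcap' : capP p q0 q1 m a b e ≤ 2 ^ (a + b - 2) :=
    le_trans (capP_le e) hcap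
  unfold Pfam
  rw [Finset.card_image_of_injOn, Finset.card_range]
  intro s hs t ht hst
  rw [Finset.mem_coe, Finset.mem_range] at hs ht
  have hs' : s < 2 ^ (a + b - 2) := by omega
  have ht' : t < 2 ^ (a + b - 2) := by omega
  unfold enc at hst
  by_cases h1 : (e.2 : ℕ) < a
  · simp only [if_pos h1] at hst
    exact encS1_inj h1 he' (by omega) hs' ht' hst
  · simp only [if_neg h1] at hst
    by_cases h2 : m - b ≤ (e.1 : ℕ)
    · simp only [if_pos h2] at hst
      exact encS2_inj h2 he' (by omega) hm hs' ht' hst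
    · simp only [if_neg h2] at hst
      exact encSig_inj (by omega) (by omega) he' hab ha hb hs' ht' hst

lemma pairsF_card {m : ℕ} : (pairsF m).card = m.choose 2 := by
  unfold pairsF
  rw [card_pairs_lt, Finset.card_univ, Fintype.card_fin]

lemma sum_capP {p q0 q1 m a b : ℕ} (ha : 1 ≤ a) (hb : 1 ≤ b) (hab : a + b ≤ m)
    (hq0 : q0 ≤ p - 1) (hq1 : q1 ≤ p - 1) :
    (∑ e ∈ pairsF m, capP p q0 q1 m a b e) + q0 * a.choose 2 + q1 * b.choose 2
      = (p - 1) * m.choose 2 := by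
  classical
  set P1 := (pairsF m).filter (fun e => (e.2 : ℕ) < a) with hP1
  set R := (pairsF m).filter (fun e => ¬ (e.2 : ℕ) < a) with hR
  set P2 := R.filter (fun e => m - b ≤ (e.1 : ℕ)) with hP2
  set P3 := R.filter (fun e => ¬ m - b ≤ (e.1 : ℕ)) with hP3
  have hsplit1 : (∑ e ∈ pairsF m, capP p q0 q1 m a b e)
      = (∑ e ∈ P1, capP p q0 q1 m a b e) + ∑ e ∈ R, capP p q0 q1 m a b e :=
    (Finset.sum_filter_add_sum_filter_not _ _ _).symm
  have hsplit2 : (∑ e ∈ R, capP p q0 q1 m a b e)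
      = (∑ e ∈ P2, capP p q0 q1 m a b e) + ∑ e ∈ P3, capP p q0 q1 m a b e :=
    (Finset.sum_filter_add_sum_filter_not _ _ _).symm
  have hv1 : (∑ e ∈ P1, capP p q0 q1 m a b e) = P1.card * (p - 1 - q0) := by
    rw [Finset.sum_congr rfl (g := fun _ => p - 1 - q0) (fun e he => by
      rw [hP1, Finset.mem_filter] at he
      unfold capP
      rw [if_pos he.2])]
    rw [Finset.sum_const, smul_eq_mul]
  have hv2 : (∑ e ∈ P2, capP p q0 q1 m a b e) = P2.card * (p - 1 - q1) := by
    rw [Finset.sum_congr rfl (g := fun _ => p - 1 - q1) (fun e he => by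
      rw [hP2, Finset.mem_filter, hR, Finset.mem_filter] at he
      unfold capP
      rw [if_neg he.1.2, if_pos he.2])]
    rw [Finset.sum_const, smul_eq_mul]
  have hv3 : (∑ e ∈ P3, capP p q0 q1 m a b e) = P3.card * (p - 1) := by
    rw [Finset.sum_congr rfl (g := fun _ => p - 1) (fun e he => by
      rw [hP3, Finset.mem_filter, hR, Finset.mem_filter] at he
      unfold capP
      rw [if_neg he.1.2, if_neg he.2])]
    rw [Finset.sum_const, smul_eq_mul]
  have hc1 : P1.card = a.choose 2 := by
    have heq : P1 = (((univ.filter (fun i : Fin m => (i : ℕ) < a)) ×ˢ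
        (univ.filter (fun i : Fin m => (i : ℕ) < a))).filter
        (fun e : Fin m × Fin m => (e.1 : ℕ) < (e.2 : ℕ))) := by
      ext e
      rw [hP1, Finset.mem_filter, mem_pairsF, Finset.mem_filter, Finset.mem_product,
        Finset.mem_filter, Finset.mem_filter]
      simp only [Finset.mem_univ, true_and]
      constructor
      · rintro ⟨h1, h2⟩
        exact ⟨⟨by omega, h2⟩, h1⟩
      · rintro ⟨⟨h1, h2⟩, h3⟩
        exact ⟨h3, h2⟩
    rw [heq, card_pairs_lt, card_filter_val_lt (by omega : a ≤ m)]
  have hc2 : P2.card = b.choose 2 := by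
    have heq : P2 = (((univ.filter (fun i : Fin m => m - b ≤ (i : ℕ))) ×ˢ
        (univ.filter (fun i : Fin m => m - b ≤ (i : ℕ)))).filter
        (fun e : Fin m × Fin m => (e.1 : ℕ) < (e.2 : ℕ))) := by
      ext e
      rw [hP2, Finset.mem_filter, hR, Finset.mem_filter, mem_pairsF, Finset.mem_filter,
        Finset.mem_product, Finset.mem_filter, Finset.mem_filter]
      simp only [Finset.mem_univ, true_and]
      constructor
      · rintro ⟨⟨h1, h2⟩, h3⟩
        exact ⟨⟨h3, by omega⟩, h1⟩
      · rintro ⟨⟨h1, h2⟩, h3⟩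
        exact ⟨⟨h3, by omega⟩, h1⟩
    rw [heq, card_pairs_lt, card_filter_val_ge (by omega : b ≤ m)]
  have hu1 : P1.card + R.card = (pairsF m).card := by
    rw [hP1, hR]
    exact Finset.card_filter_add_card_filter_not _
  have hu2 : P2.card + P3.card = R.card := by
    rw [hP2, hP3]
    exact Finset.card_filter_add_card_filter_not _
  rw [hsplit1, hsplit2, hv1, hv2, hv3, hc1, hc2]
  have hz : P3.card = m.choose 2 - a.choose 2 - b.choose 2 := by
    have := pairsF_card (m := m)
    omega
  rw [hz]
  set x := a.choose 2
  set y := b.choose 2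
  set z := m.choose 2
  have hxyz : x + y ≤ z := by
    have := pairsF_card (m := m)
    omega
  have e0 : x * (p - 1 - q0) + q0 * x = x * (p - 1) := by
    rw [mul_comm q0 x, ← Nat.mul_add]
    congr 1
    omega
  have e1 : y * (p - 1 - q1) + q1 * y = y * (p - 1) := by
    rw [mul_comm q1 y, ← Nat.mul_add]
    congr 1
    omega
  calc x * (p - 1 - q0) + (y * (p - 1 - q1) + (z - x - y) * (p - 1)) + q0 * x + q1 * y
      = (x * (p - 1 - q0) + q0 * x) + (y * (p - 1 - q1) + q1 * y) + (z - x - y) * (p - 1) := by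
        ring
    _ = x * (p - 1) + y * (p - 1) + (z - x - y) * (p - 1) := by rw [e0, e1]
    _ = (x + y + (z - x - y)) * (p - 1) := by ring
    _ = (p - 1) * z := by
        rw [show x + y + (z - x - y) = z from by omega, Nat.mul_comm]

/-! ### base cardinality -/

lemma prod_ite_eq_card {m : ℕ} (w : Fin m) :
    (∏ i : Fin m, if i = w then 1 else 2) = 2 ^ (m - 1) := by
  rw [← Finset.mul_prod_erase univ _ (Finset.mem_univ w), if_pos rfl, one_mul]
  rw [Finset.prod_congr rfl (fun i hi => if_neg (Finset.ne_of_mem_erase hi))]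
  rw [Finset.prod_const, Finset.card_erase_of_mem (Finset.mem_univ w), Finset.card_univ,
    Fintype.card_fin]

lemma piFinset_card_single {m : ℕ} (cell : Fin m → Finset (Fin 3)) (w : Fin m)
    (hw : (cell w).card = 1) (ho : ∀ i, i ≠ w → (cell i).card = 2) :
    (Fintype.piFinset cell).card = 2 ^ (m - 1) := by
  rw [Fintype.card_piFinset]
  rw [← prod_ite_eq_card w]
  apply Finset.prod_congr rfl
  intro i _
  by_cases h : i = w
  · rw [if_pos h, h, hw]
  · rw [if_neg h, ho i h]

lemma T2_card {m a : ℕ} (ha : a ≤ m) : (T2 m a).card = a * 2 ^ (m - 1) := by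
  unfold T2
  rw [Finset.card_biUnion]
  · rw [Finset.sum_congr rfl (g := fun _ => 2 ^ (m - 1)) (fun z hz => by
      rw [Finset.mem_range] at hz
      exact piFinset_card_single _ ⟨z, by omega⟩
        (by rw [if_pos rfl]; rfl)
        (by
          intro i hi
          rw [if_neg (fun h => hi (Fin.ext h))]
          split_ifs <;> rfl))]
    rw [Finset.sum_const, smul_eq_mul, Finset.card_range]
  · intro z hz z' hz' hzz
    rw [Finset.mem_coe, Finset.mem_range] at hz hz'
    simp only [Function.onFun]
    rw [Finset.disjoint_left]
    intro c hc hc'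
    rw [Fintype.mem_piFinset] at hc hc'
    have h1 := hc ⟨z, by omega⟩
    have h2 := hc' ⟨z, by omega⟩
    rw [if_pos rfl] at h1
    rw [if_neg (by simpa using hzz), if_pos (by simpa using hz)] at h2
    rw [eq0_of_mem0 h1] at h2
    exact ne0_of_mem12 h2 rfl

lemma T3_card {m a b : ℕ} (hb : b ≤ m) (hab : a + b ≤ m) :
    (T3 m b).card = b * 2 ^ (m - 1) := by
  unfold T3
  rw [Finset.card_biUnion]
  · rw [Finset.sum_congr rfl (g := fun _ => 2 ^ (m - 1)) (fun u hu => by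
      rw [Finset.mem_range] at hu
      exact piFinset_card_single _ ⟨m - 1 - u, by omega⟩
        (by rw [if_pos rfl]; rfl)
        (by
          intro i hi
          rw [if_neg (fun h => hi (Fin.ext h))]
          split_ifs <;> rfl))]
    rw [Finset.sum_const, smul_eq_mul, Finset.card_range]
  · intro u hu u' hu' huu
    rw [Finset.mem_coe, Finset.mem_range] at hu hu'
    simp only [Function.onFun]
    rw [Finset.disjoint_left]
    intro c hc hc'
    rw [Fintype.mem_piFinset] at hc hc'
    have h1 := hc ⟨m - 1 - u, by omega⟩
    have h2 := hc' ⟨m - 1 - u, by omega⟩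
    rw [if_pos rfl] at h1
    have hne : ¬ ((⟨m - 1 - u, by omega⟩ : Fin m) : ℕ) = m - 1 - u' := by
      simp only
      omega
    rw [if_neg hne, if_pos (by simp only; omega)] at h2
    rw [eq1_of_mem1 h1] at h2
    exact ne1_of_mem02 h2 rfl

lemma T4a_card {m a : ℕ} : (T4a m a).card = 2 ^ m := by
  unfold T4a
  rw [Fintype.card_piFinset]
  rw [Finset.prod_congr rfl (g := fun _ => 2) (fun i _ => by split_ifs <;> rfl)]
  rw [Finset.prod_const, Finset.card_univ, Fintype.card_fin]

lemma T4b_card {m a b : ℕ} (hab : a + b ≤ m) :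
    (T4b m a b).card = (m - b - a) * 2 ^ (m - 1) := by
  unfold T4b
  rw [Finset.card_biUnion]
  · rw [Finset.sum_congr rfl (g := fun _ => 2 ^ (m - 1)) (fun k hk => by
      rw [Finset.mem_Ico] at hk
      exact piFinset_card_single _ ⟨k, by omega⟩
        (by rw [if_pos rfl]; rfl)
        (by
          intro i hi
          rw [if_neg (fun h => hi (Fin.ext h))]
          split_ifs <;> rfl))]
    rw [Finset.sum_const, smul_eq_mul, Nat.card_Ico]
  · intro k hk k' hk' hkk
    rw [Finset.mem_coe, Finset.mem_Ico] at hk hk'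
    simp only [Function.onFun]
    rw [Finset.disjoint_left]
    intro c hc hc'
    rw [Fintype.mem_piFinset] at hc hc'
    rcases Nat.lt_or_ge k k' with hlt | hge
    · have h1 := hc ⟨k', by omega⟩
      have h2 := hc' ⟨k', by omega⟩
      rw [if_pos rfl] at h2
      rw [if_neg (by simp only; omega), if_neg (by simp only; omega)] at h1
      rw [eq1_of_mem1 h2] at h1
      exact ne1_of_mem02 h1 rfl
    · have hlt : k' < k := by omega
      have h1 := hc ⟨k, by omega⟩
      have h2 := hc' ⟨k, by omega⟩
      rw [if_pos rfl] at h1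
      rw [if_neg (by simp only; omega), if_neg (by simp only; omega)] at h2
      rw [eq1_of_mem1 h1] at h2
      exact ne1_of_mem02 h2 rfl

lemma base_card {m a b : ℕ} (hm : 1 ≤ m) (ha : 1 ≤ a) (hb : 1 ≤ b) (hab : a + b ≤ m) :
    (Base m a b).card = 2 ^ m + m * 2 ^ (m - 1) := by
  -- disjointness facts
  have d23 : Disjoint (T2 m a) (T3 m b) := by
    rw [Finset.disjoint_left]
    intro c hc hc'
    unfold T2 at hc
    unfold T3 at hc'
    rw [Finset.mem_biUnion] at hc hc'
    obtain ⟨z, hz, hcz⟩ := hc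
    obtain ⟨u, hu, hcu⟩ := hc'
    rw [Finset.mem_range] at hz hu
    rw [Fintype.mem_piFinset] at hcz hcu
    have h1 := hcz ⟨z, by omega⟩
    have h2 := hcu ⟨z, by omega⟩
    rw [if_pos rfl] at h1
    rw [if_neg (by simp only; omega), if_neg (by simp only; omega)] at h2
    rw [eq0_of_mem0 h1] at h2
    exact ne0_of_mem12 h2 rfl
  have d24a : Disjoint (T2 m a) (T4a m a) := by
    rw [Finset.disjoint_left]
    intro c hc hc'
    unfold T2 at hc
    unfold T4a at hc'
    rw [Finset.mem_biUnion] at hc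
    obtain ⟨z, hz, hcz⟩ := hc
    rw [Finset.mem_range] at hz
    rw [Fintype.mem_piFinset] at hcz hc'
    have h1 := hcz ⟨z, by omega⟩
    have h2 := hc' ⟨z, by omega⟩
    rw [if_pos rfl] at h1
    rw [if_pos (by simp only; omega)] at h2
    rw [eq0_of_mem0 h1] at h2
    exact ne0_of_mem12 h2 rfl
  have d24b : Disjoint (T2 m a) (T4b m a b) := by
    rw [Finset.disjoint_left]
    intro c hc hc'
    unfold T2 at hc
    unfold T4b at hc'
    rw [Finset.mem_biUnion] at hc hc'
    obtain ⟨z, hz, hcz⟩ := hc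
    obtain ⟨k, hk, hck⟩ := hc'
    rw [Finset.mem_range] at hz
    rw [Finset.mem_Ico] at hk
    rw [Fintype.mem_piFinset] at hcz hck
    have h1 := hcz ⟨z, by omega⟩
    have h2 := hck ⟨z, by omega⟩
    rw [if_pos rfl] at h1
    rw [if_neg (by simp only; omega), if_pos (by simp only; omega)] at h2
    rw [eq0_of_mem0 h1] at h2
    exact ne0_of_mem12 h2 rfl
  have d34a : Disjoint (T3 m b) (T4a m a) := by
    rw [Finset.disjoint_left]
    intro c hc hc'
    unfold T3 at hc
    unfold T4a at hc'
    rw [Finset.mem_biUnion] at hc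
    obtain ⟨u, hu, hcu⟩ := hc
    rw [Finset.mem_range] at hu
    rw [Fintype.mem_piFinset] at hcu hc'
    have h1 := hcu ⟨m - 1 - u, by omega⟩
    have h2 := hc' ⟨m - 1 - u, by omega⟩
    rw [if_pos rfl] at h1
    rw [if_neg (by simp only; omega)] at h2
    rw [eq1_of_mem1 h1] at h2
    exact ne1_of_mem02 h2 rfl
  have d34b : Disjoint (T3 m b) (T4b m a b) := by
    rw [Finset.disjoint_left]
    intro c hc hc'
    unfold T3 at hc
    unfold T4b at hc'
    rw [Finset.mem_biUnion] at hc hc'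
    obtain ⟨u, hu, hcu⟩ := hc
    obtain ⟨k, hk, hck⟩ := hc'
    rw [Finset.mem_range] at hu
    rw [Finset.mem_Ico] at hk
    rw [Fintype.mem_piFinset] at hcu hck
    have h1 := hcu ⟨m - 1 - u, by omega⟩
    have h2 := hck ⟨m - 1 - u, by omega⟩
    rw [if_pos rfl] at h1
    rw [if_neg (by simp only; omega), if_neg (by simp only; omega)] at h2
    rw [eq1_of_mem1 h1] at h2
    exact ne1_of_mem02 h2 rfl
  have d4a4b : Disjoint (T4a m a) (T4b m a b) := by
    rw [Finset.disjoint_left]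
    intro c hc hc'
    unfold T4a at hc
    unfold T4b at hc'
    rw [Finset.mem_biUnion] at hc'
    obtain ⟨k, hk, hck⟩ := hc'
    rw [Finset.mem_Ico] at hk
    rw [Fintype.mem_piFinset] at hc hck
    have h1 := hc ⟨k, by omega⟩
    have h2 := hck ⟨k, by omega⟩
    rw [if_pos rfl] at h2
    rw [if_neg (by simp only; omega)] at h1
    rw [eq1_of_mem1 h2] at h1
    exact ne1_of_mem02 h1 rfl
  unfold Base
  rw [Finset.card_union_of_disjoint, Finset.card_union_of_disjoint,
    Finset.card_union_of_disjoint d23]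
  · rw [T2_card (by omega), T3_card (by omega) hab, T4a_card, T4b_card hab]
    have hx : a * 2 ^ (m-1) + b * 2 ^ (m-1) + 2 ^ m + (m - b - a) * 2 ^ (m-1)
        = 2 ^ m + (a + b + (m - b - a)) * 2 ^ (m-1) := by ring
    rw [hx, show a + b + (m - b - a) = m from by omega]
  · exact Finset.disjoint_union_left.mpr ⟨d24a, d34a⟩
  · exact Finset.disjoint_union_left.mpr
      ⟨Finset.disjoint_union_left.mpr ⟨d24b, d34b⟩, d4a4b⟩

/-! ### signatures, disjointness, the final construction -/

def sigP (m a b : ℕ) (e : Fin m × Fin m) (c : Fin m → Fin 3) : Prop :=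
  if (e.2 : ℕ) < a then c e.1 = 0 ∧ c e.2 = 0
  else if m - b ≤ (e.1 : ℕ) then c e.1 = 1 ∧ c e.2 = 1
  else c e.1 = 0 ∧ c e.2 = 1

lemma pfam_sig {p q0 q1 m a b : ℕ} (hab : a + b ≤ m) {e : Fin m × Fin m}
    (he : e ∈ pairsF m) {c : Fin m → Fin 3} (hc : c ∈ Pfam p q0 q1 m a b e) :
    sigP m a b e c := by
  obtain ⟨t, ht, rfl⟩ := Finset.mem_image.mp hc
  have ho := own_sig hab (mem_pairsF.mp he) t
  unfold sigP
  split_ifs with h1 h2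
  · exact ho.1 h1
  · exact ho.2.1 h2
  · exact ho.2.2 h1 h2

lemma notsig_of_base {m a b : ℕ} (hab : a + b ≤ m) (hb : 1 ≤ b) {c : Fin m → Fin 3}
    (hc : c ∈ Base m a b) {e : Fin m × Fin m} (he : e ∈ pairsF m) : ¬ sigP m a b e c := by
  have he' := mem_pairsF.mp he
  have hbs := base_no_sig hab hb hc e.1 e.2 he'
  unfold sigP
  split_ifs with h1 h2
  · exact hbs.1 h1
  · exact hbs.2.1 h2
  · exact hbs.2.2 (by omega) (by omega)

lemma notsig_of_pfam {p q0 q1 m a b : ℕ} (hab : a + b ≤ m) (hmb : a + 2 * b ≤ m + 2)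
    {f : Fin m × Fin m} (hf : f ∈ pairsF m) {c : Fin m → Fin 3}
    (hc : c ∈ Pfam p q0 q1 m a b f) {e : Fin m × Fin m} (he : e ∈ pairsF m)
    (hef : e ≠ f) : ¬ sigP m a b e c := by
  obtain ⟨t, ht, rfl⟩ := Finset.mem_image.mp hc
  have hcr := cross_no_sig hab hmb (mem_pairsF.mp hf) t (mem_pairsF.mp he) hef
  unfold sigP
  split_ifs with h1 h2
  · exact hcr.1 h1
  · exact hcr.2.1 h2
  · exact hcr.2.2 (by omega) (by omega)

lemma filter_sig_subset {p q0 q1 m a b : ℕ} (hab : a + b ≤ m) (hb : 1 ≤ b)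
    (hmb : a + 2 * b ≤ m + 2) {e : Fin m × Fin m} (he : e ∈ pairsF m)
    {c : Fin m → Fin 3} (hc : c ∈ Astar p q0 q1 m a b) (hsig : sigP m a b e c) :
    c ∈ Pfam p q0 q1 m a b e := by
  unfold Astar at hc
  rw [Finset.mem_union] at hc
  rcases hc with hc | hc
  · exact absurd hsig (notsig_of_base hab hb hc he)
  · rw [Finset.mem_biUnion] at hc
    obtain ⟨f, hf, hcf⟩ := hc
    by_cases hef : e = f
    · rw [hef]; exact hcf
    · exact absurd hsig (notsig_of_pfam hab hmb hf hcf he hef)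

lemma astar_card {p q0 q1 m a b : ℕ} (hm : 1 ≤ m) (ha : 1 ≤ a) (hb : 1 ≤ b)
    (hab : a + b ≤ m) (hma : 2 * a + b ≤ m + 2) (hmb : a + 2 * b ≤ m + 2)
    (hcap : p - 1 ≤ 2 ^ (a + b - 2)) (hq0 : q0 ≤ p - 1) (hq1 : q1 ≤ p - 1) :
    (Astar p q0 q1 m a b).card + (q0 * a.choose 2 + q1 * b.choose 2)
      = 2 ^ m + m * 2 ^ (m - 1) + (p - 1) * m.choose 2 := by
  have hdisj : Disjoint (Base m a b) ((pairsF m).biUnion (Pfam p q0 q1 m a b)) := by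
    rw [Finset.disjoint_left]
    intro c hcB hcU
    rw [Finset.mem_biUnion] at hcU
    obtain ⟨f, hf, hcf⟩ := hcU
    exact notsig_of_base hab hb hcB hf (pfam_sig hab hf hcf)
  have hbiU : ((pairsF m).biUnion (Pfam p q0 q1 m a b)).card
      = ∑ e ∈ pairsF m, capP p q0 q1 m a b e := by
    rw [Finset.card_biUnion]
    · exact Finset.sum_congr rfl (fun e he => pfam_card hm ha hb hab hma hmb hcap he)
    · intro e he f hf hef
      simp only [Function.onFun]
      rw [Finset.disjoint_left]
      intro c hce hcf
      exact notsig_of_pfam hab hmb hf hcf he hef (pfam_sig hab he hce)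
  unfold Astar
  rw [Finset.card_union_of_disjoint hdisj, base_card hm ha hb hab, hbiU]
  calc 2 ^ m + m * 2 ^ (m - 1) + (∑ e ∈ pairsF m, capP p q0 q1 m a b e)
        + (q0 * a.choose 2 + q1 * b.choose 2)
      = 2 ^ m + m * 2 ^ (m - 1) + ((∑ e ∈ pairsF m, capP p q0 q1 m a b e)
        + q0 * a.choose 2 + q1 * b.choose 2) := by ring
    _ = 2 ^ m + m * 2 ^ (m - 1) + (p - 1) * m.choose 2 := by
        rw [sum_capP ha hb hab hq0 hq1]

theorem astar_avoid {p q0 q1 m a b : ℕ} (hp : 1 ≤ p) (hm : 1 ≤ m) (ha : 1 ≤ a)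
    (hb : 1 ≤ b) (hab : a + b ≤ m) (hma : 2 * a + b ≤ m + 2) (hmb : a + 2 * b ≤ m + 2)
    (hcap : p - 1 ≤ 2 ^ (a + b - 2)) (hq0 : q0 ≤ p - 1) (hq1 : q1 ≤ p - 1) :
    ¬ ConfigIn (Fabcd (p - q0) p p (p - q1)) (Astar p q0 q1 m a b) := by
  set A := Astar p q0 q1 m a b with hA
  have key : ∀ x y : Fin m, (x : ℕ) < (y : ℕ) → p - q0 ≤ cnt A x y 0 0 →
      p ≤ cnt A x y 1 0 → p ≤ cnt A x y 0 1 → p - q1 ≤ cnt A x y 1 1 → False := by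
    intro x y hxy k00 k10 k01 k11
    have hep : (x, y) ∈ pairsF m := mem_pairsF.mpr hxy
    have hcnt : ∀ u v : Fin 3,
        (∀ c ∈ A, (c x = u ∧ c y = v) → sigP m a b (x, y) c) →
        cnt A x y u v ≤ capP p q0 q1 m a b (x, y) := by
      intro u v hpat
      have hsub : A.filter (fun c => c x = u ∧ c y = v) ⊆ Pfam p q0 q1 m a b (x, y) := by
        intro c hc
        rw [Finset.mem_filter] at hc
        exact filter_sig_subset hab hb hmb hep hc.1 (hpat c hc.1 hc.2)
      calc cnt A x y u v ≤ (Pfam p q0 q1 m a b (x, y)).card := Finset.card_le_card hsub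
      _ ≤ capP p q0 q1 m a b (x, y) := by
          unfold Pfam
          exact le_trans Finset.card_image_le (le_of_eq (Finset.card_range _))
    by_cases h1 : ((x, y).2 : ℕ) < a
    · have hle := hcnt 0 0 (fun c _ hc => by
        unfold sigP
        rw [if_pos h1]
        exact hc)
      have hcapv : capP p q0 q1 m a b (x, y) = p - 1 - q0 := by
        unfold capP
        rw [if_pos h1]
      omega
    · by_cases h2 : m - b ≤ ((x, y).1 : ℕ)
      · have hle := hcnt 1 1 (fun c _ hc => by
          unfold sigP
          rw [if_neg h1, if_pos h2]
          exact hc)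
        have hcapv : capP p q0 q1 m a b (x, y) = p - 1 - q1 := by
          unfold capP
          rw [if_neg h1, if_pos h2]
        omega
      · have hle := hcnt 0 1 (fun c _ hc => by
          unfold sigP
          rw [if_neg h1, if_neg h2]
          exact hc)
        have hcapv : capP p q0 q1 m a b (x, y) = p - 1 := by
          unfold capP
          rw [if_neg h1, if_neg h2]
        omega
  rw [configIn_iff]
  rintro ⟨i, j, hij, h00, h10, h01, h11⟩
  have hvne : (i : ℕ) ≠ (j : ℕ) := fun h => hij (Fin.ext h)
  rcases Nat.lt_or_ge (i : ℕ) (j : ℕ) with hlt | hge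
  · exact key i j hlt h00 h10 h01 h11
  · have hlt : (j : ℕ) < (i : ℕ) := by omega
    rw [cnt_comm] at h00 h10 h01 h11
    exact key j i hlt h00 h01 h10 h11

end ForbWork


open ForbWork in
theorem forb_general_lower (p q₀ q₁ r₁ r₂ m : ℕ) (hp : 2 ≤ p)
    (hq₀ : q₀ ≤ p - 1) (hq₁ : q₁ ≤ p - 1)
    (hr : r₁ + r₂ = Nat.clog 2 (p - 1))
    (hm : 2 * Nat.choose (r₁ + 1) 2 + 2 * Nat.choose (r₂ + 1) 2 + 2 ≤ m) :
    forb m 3 (pK2 p) - min q₀ q₁ * Nat.choose (r₁ + 1) 2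
        - max q₀ q₁ * Nat.choose (r₂ + 1) 2
      ≤ forb m 3 (Fabcd (p - q₀) p p (p - q₁)) := by
  -- basic numeric facts
  have hch : ∀ k : ℕ, k ≤ (k + 1).choose 2 := by
    intro k
    rw [Nat.choose_succ_succ, Nat.choose_one_right]
    omega
  have hm' : 2 * r₁ + 2 * r₂ + 2 ≤ m := by
    have h1 := hch r₁
    have h2 := hch r₂
    omega
  have hm1 : 1 ≤ m := by omega
  have hp1 : 1 ≤ p := by omega
  have hclog : p - 1 ≤ 2 ^ (r₁ + r₂) := by
    rw [hr]
    exact Nat.le_pow_clog (by norm_num) _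
  -- upper bound for pK2
  have hne0 : pK2 p ≠ 0 := by
    intro h0
    have hc := card_Fabcd p p p p
    rw [show Fabcd p p p p = pK2 p from rfl, h0] at hc
    simp at hc
    omega
  have hub : forb m 3 (pK2 p) ≤ 2 ^ m + m * 2 ^ (m - 1) + (p - 1) * m.choose 2 := by
    apply forb_upper _ hne0
    intro A hA
    apply avoider_card_le hm1 hp1 A
    intro i j hij hcon
    exact hA ((configIn_iff A).mpr ⟨i, j, hij, hcon.1, hcon.2.1, hcon.2.2.1, hcon.2.2.2⟩)
  rcases le_total q₀ q₁ with hle | hle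
  · -- q₀ is the min : (0,0)-clique of size r₁+1, (1,1)-clique of size r₂+1
    have havd := astar_avoid (p := p) (q0 := q₀) (q1 := q₁) (m := m)
      (a := r₁ + 1) (b := r₂ + 1) hp1 hm1 (by omega) (by omega) (by omega)
      (by omega) (by omega) (by
        have he : r₁ + 1 + (r₂ + 1) - 2 = r₁ + r₂ := by omega
        rw [he]
        exact hclog) hq₀ hq₁
    have hcard := astar_card (p := p) (q0 := q₀) (q1 := q₁) (m := m)
      (a := r₁ + 1) (b := r₂ + 1) hm1 (by omega) (by omega) (by omega)
      (by omega) (by omega) (by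
        have he : r₁ + 1 + (r₂ + 1) - 2 = r₁ + r₂ := by omega
        rw [he]
        exact hclog) hq₀ hq₁
    have hlb := forb_lower (Fabcd (p - q₀) p p (p - q₁)) _ havd
    rw [min_eq_left hle, max_eq_right hle]
    set X := q₀ * (r₁ + 1).choose 2 with hX
    set Y := q₁ * (r₂ + 1).choose 2 with hY
    set G := 2 ^ m + m * 2 ^ (m - 1) + (p - 1) * m.choose 2 with hG
    omega
  · -- q₁ is the min : (0,0)-clique of size r₂+1, (1,1)-clique of size r₁+1
    have havd := astar_avoid (p := p) (q0 := q₀) (q1 := q₁) (m := m)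
      (a := r₂ + 1) (b := r₁ + 1) hp1 hm1 (by omega) (by omega) (by omega)
      (by omega) (by omega) (by
        have he : r₂ + 1 + (r₁ + 1) - 2 = r₁ + r₂ := by omega
        rw [he]
        exact hclog) hq₀ hq₁
    have hcard := astar_card (p := p) (q0 := q₀) (q1 := q₁) (m := m)
      (a := r₂ + 1) (b := r₁ + 1) hm1 (by omega) (by omega) (by omega)
      (by omega) (by omega) (by
        have he : r₂ + 1 + (r₁ + 1) - 2 = r₁ + r₂ := by omega
        rw [he]
        exact hclog) hq₀ hq₁
    have hlb := forb_lower (Fabcd (p - q₀) p p (p - q₁)) _ havd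
    rw [min_eq_right hle, max_eq_left hle]
    set X := q₁ * (r₁ + 1).choose 2 with hX
    set Y := q₀ * (r₂ + 1).choose 2 with hY
    set G := 2 ^ m + m * 2 ^ (m - 1) + (p - 1) * m.choose 2 with hG
    omega
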